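/- Over a field K of characteristic 0, there is no 4-quadratic family of matrices: any 4 × 6 matrix of the form B(A₁,A₂,A₃,A₄) = [[0,0,0,−a,−b,−c],[0,a,b,0,0,−d],[−a,0,c,0,d,0],[−b,−c,0,−d,0,0]] (a,b,c,d ∈ K) has rank at most 3; hence there are no reduced quadratic 2-step nilpotent Lie algebras of type 4. -/
import Mathlib

open Matrix

private lemma rank_aux {K : Type*} [Field K] {n : Type*} [Fintype n]
    (M : Matrix (Fin 4) n K) (v : Fin 4 → K) (hv : v ≠ 0)
    (h : Matrix.vecMul v M = 0) : M.rank ≤ 3 := by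
  have hf : ∃ i, v i ≠ 0 := by
    by_contra hc
    push_neg at hc
    exact hv (funext hc)
  obtain ⟨i, hi⟩ := hf
  let f : (Fin 4 → K) →ₗ[K] K :=
    { toFun := fun x => v ⬝ᵥ x
      map_add' := fun x y => by simp [dotProduct_add]
      map_smul' := fun c x => by simp [dotProduct_smul] }
  have hle : LinearMap.range M.mulVecLin ≤ LinearMap.ker f := by
    rintro x ⟨u, rfl⟩
    simp only [LinearMap.mem_ker, Matrix.mulVecLin_apply]
    show v ⬝ᵥ (M *ᵥ u) = 0
    rw [Matrix.dotProduct_mulVec, h, zero_dotProduct]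
  have hfne : f ≠ 0 := by
    intro hf0
    have : f (Pi.single i 1) = 0 := by rw [hf0]; rfl
    simp [f, dotProduct_single] at this
    exact hi this
  have hker : Module.finrank K (LinearMap.ker f) ≤ 3 := by
    have h4 : Module.finrank K (Fin 4 → K) = 4 := by simp
    have := LinearMap.finrank_range_add_finrank_ker f
    have hr : 0 < Module.finrank K (LinearMap.range f) := by
      rw [Module.finrank_pos_iff]
      rcases Submodule.ne_bot_iff _ |>.mp (by
        intro hb
        exact hfne (LinearMap.range_eq_bot.mp hb)) with ⟨x, hx, hxne⟩
      exact nontrivial_of_ne ⟨x, hx⟩ 0 (by simp [Subtype.ext_iff]; exact hxne)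
    omega
  calc M.rank = Module.finrank K (LinearMap.range M.mulVecLin) := rfl
    _ ≤ Module.finrank K (LinearMap.ker f) := Submodule.finrank_mono hle
    _ ≤ 3 := hker

private lemma vec6_four {α : Type*} (x0 x1 x2 x3 x4 x5 : α) : ![x0,x1,x2,x3,x4,x5] 4 = x4 := rfl
private lemma vec6_five {α : Type*} (x0 x1 x2 x3 x4 x5 : α) : ![x0,x1,x2,x3,x4,x5] 5 = x5 := rfl

/-- Over a field of characteristic 0, every 4×6 matrix of the shape
`B(A₁,A₂,A₃,A₄)` has rank at most 3; hence there is no 4-quadratic family of matrices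
and no reduced quadratic 2-step nilpotent Lie algebra of type 4. -/
theorem stmt_8 {K : Type*} [Field K] [CharZero K] :
    (∀ a b c d : K,
      (!![0, 0, 0, -a, -b, -c;
          0, a, b, 0, 0, -d;
          -a, 0, c, 0, d, 0;
          -b, -c, 0, -d, 0, 0] : Matrix (Fin 4) (Fin 6) K).rank ≤ 3) ∧
    ¬ ∃ A : Fin 4 → Matrix (Fin 4) (Fin 4) K,
        (∀ i, (A i)ᵀ = -(A i)) ∧
        (∀ i k, A i k i = 0) ∧
        (∀ i j : Fin 4, i < j → ∀ k, A i k j = -(A j k i)) ∧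
        (Matrix.of fun (k : Fin 4) (p : {p : Fin 4 × Fin 4 // p.1 < p.2}) =>
          A p.val.1 k p.val.2).rank = 4 := by
  constructor
  · intro a b c d
    by_cases h0 : a = 0 ∧ b = 0 ∧ c = 0 ∧ d = 0
    · obtain ⟨rfl, rfl, rfl, rfl⟩ := h0
      have : (!![0, 0, 0, -(0:K), -0, -0;
            0, 0, 0, 0, 0, -0;
            -0, 0, 0, 0, 0, 0;
            -0, -0, 0, -0, 0, 0] : Matrix (Fin 4) (Fin 6) K) = 0 := by
        ext i j
        fin_cases i <;> fin_cases j <;>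
          simp [vec6_four, vec6_five, Matrix.vecHead, Matrix.vecTail, Function.comp]
      rw [this, Matrix.rank_zero]
      omega
    · apply rank_aux _ ![d, -c, b, -a]
      · intro hv
        apply h0
        refine ⟨?_, ?_, ?_, ?_⟩ <;>
          [have := congrFun hv 3; have := congrFun hv 2; have := congrFun hv 1;
           have := congrFun hv 0] <;> simpa [neg_eq_zero] using this
      · funext j
        fin_cases j <;>
          simp [Matrix.vecMul, dotProduct, Fin.sum_univ_four, vec6_four, vec6_five,
            Matrix.vecHead, Matrix.vecTail, Function.comp] <;> ring
  · rintro ⟨A, hskew, hdiag, hrel, hrank⟩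
    -- basic entry identities
    have hsk : ∀ i j k : Fin 4, A i j k = -(A i k j) := by
      intro i j k
      have := congrFun (congrFun (hskew i) k) j
      simpa [Matrix.transpose_apply, Matrix.neg_apply] using this
    have hrow : ∀ i k : Fin 4, A i i k = 0 := by
      intro i k
      rw [hsk]; simp [hdiag]
    have hdd : ∀ i k : Fin 4, A i k k = 0 := by
      intro i k
      have h := hsk i k k
      linear_combination (1/2 : K) * h
    set B : Matrix (Fin 4) {p : Fin 4 × Fin 4 // p.1 < p.2} K :=
      Matrix.of fun (k : Fin 4) (p : {p : Fin 4 × Fin 4 // p.1 < p.2}) =>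
          A p.val.1 k p.val.2 with hBdef
    have h01 : (0 : Fin 4) < 1 := by decide
    have h02 : (0 : Fin 4) < 2 := by decide
    have h12 : (1 : Fin 4) < 2 := by decide
    have hle3 : B.rank ≤ 3 := by
      by_cases hv0 : (![A 1 3 2, -(A 0 3 2), A 0 3 1, -(A 0 2 1)] : Fin 4 → K) = 0
      · -- all four parameters vanish; use the vector (1,0,0,0)
        have ha : A 0 2 1 = 0 := by
          have := congrFun hv0 3; simpa [neg_eq_zero] using this
        have hb : A 0 3 1 = 0 := by
          have := congrFun hv0 2; simpa using this
        have hc : A 0 3 2 = 0 := by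
          have := congrFun hv0 1; simpa [neg_eq_zero] using this
        apply rank_aux _ ![1, 0, 0, 0]
        · intro h
          have := congrFun h 0
          simp at this
        · have e : ∀ (i j : Fin 4) (hij : (i, j).1 < (i, j).2), A i 0 j = 0 →
              Matrix.vecMul ![(1:K), 0, 0, 0] B ⟨(i, j), hij⟩ = 0 := by
            intro i j hij hz
            simp [Matrix.vecMul, dotProduct, Fin.sum_univ_four, hBdef,
              Matrix.vecHead, Matrix.vecTail, hz]
          have e01 := e 0 1 (by decide) (hrow 0 1)
          have e02 := e 0 2 (by decide) (hrow 0 2)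
          have e03 := e 0 3 (by decide) (hrow 0 3)
          have e12 := e 1 2 (by decide) (by linear_combination hsk 1 0 2 - hrel 0 1 h01 2 + ha)
          have e13 := e 1 3 (by decide) (by linear_combination hsk 1 0 3 - hrel 0 1 h01 3 + hb)
          have e23 := e 2 3 (by decide) (by linear_combination hsk 2 0 3 - hrel 0 2 h02 3 + hc)
          funext p
          obtain ⟨⟨i, j⟩, hij⟩ := p
          fin_cases i <;> fin_cases j <;>
            first
              | exact absurd hij (by decide)
              | exact e01 | exact e02 | exact e03 | exact e12 | exact e13 | exact e23
      · apply rank_aux _ _ hv0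
        have e : ∀ (i j : Fin 4) (hij : (i, j).1 < (i, j).2),
            A 1 3 2 * A i 0 j - A 0 3 2 * A i 1 j
              + A 0 3 1 * A i 2 j - A 0 2 1 * A i 3 j = 0 →
            Matrix.vecMul ![A 1 3 2, -(A 0 3 2), A 0 3 1, -(A 0 2 1)] B ⟨(i, j), hij⟩ = 0 := by
          intro i j hij hz
          simp only [Matrix.vecMul, dotProduct, Fin.sum_univ_four, hBdef,
            Matrix.of_apply, Matrix.cons_val_zero, Matrix.cons_val_one, Matrix.head_cons,
            Matrix.cons_val_two, Matrix.tail_cons, Matrix.cons_val_three, Matrix.cons_val_succ,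
            Matrix.vecHead, Matrix.vecTail, Function.comp, Pi.zero_apply]
          linear_combination hz
        have e01 := e 0 1 (by decide) (by
          linear_combination (A 1 3 2) * hrow 0 1 - (A 0 3 2) * hdd 0 1)
        have e02 := e 0 2 (by decide) (by
          linear_combination (A 1 3 2) * hrow 0 2 - (A 0 3 2) * hsk 0 1 2 + (A 0 3 1) * hdd 0 2)
        have e03 := e 0 3 (by decide) (by
          linear_combination (A 1 3 2) * hrow 0 3 - (A 0 3 2) * hsk 0 1 3 +
            (A 0 3 1) * hsk 0 2 3 - (A 0 2 1) * hdd 0 3)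
        have e12 := e 1 2 (by decide) (by
          linear_combination (A 1 3 2) * hsk 1 0 2 - (A 1 3 2) * hrel 0 1 h01 2 -
            (A 0 3 2) * hrow 1 2 + (A 0 3 1) * hdd 1 2)
        have e13 := e 1 3 (by decide) (by
          linear_combination (A 1 3 2) * hsk 1 0 3 - (A 1 3 2) * hrel 0 1 h01 3 -
            (A 0 3 2) * hrow 1 3 + (A 0 3 1) * hsk 1 2 3 - (A 0 2 1) * hdd 1 3)
        have e23 := e 2 3 (by decide) (by
          linear_combination (A 1 3 2) * hsk 2 0 3 - (A 1 3 2) * hrel 0 2 h02 3 -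
            (A 0 3 2) * hsk 2 1 3 + (A 0 3 2) * hrel 1 2 h12 3 +
            (A 0 3 1) * hrow 2 3 - (A 0 2 1) * hdd 2 3)
        funext p
        obtain ⟨⟨i, j⟩, hij⟩ := p
        fin_cases i <;> fin_cases j <;>
          first
            | exact absurd hij (by decide)
            | exact e01 | exact e02 | exact e03 | exact e12 | exact e13 | exact e23
    omega
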